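/- Let c be a constant with 0 < c < 1/2. For any p ∈ (c, 1−c) and q ∈ (0, p), there exists u ∈ (0, 1) such that p·u^{1−q} + (1−p)·u^{−q} = 1. -/

import Mathlib

open Set Filter

theorem stmt_1 (c p q : ℝ) (hc : 0 < c) (hc' : c < 1/2)
    (hp : p ∈ Set.Ioo c (1 - c)) (hq : q ∈ Set.Ioo 0 p) :
    ∃ u ∈ Set.Ioo (0:ℝ) 1, p * u ^ (1 - q) + (1 - p) * u ^ (-q) = 1 := by
  obtain ⟨hpc, hpc'⟩ := hp
  obtain ⟨hq0, hqp⟩ := hq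
  have hp0 : 0 < p := hc.trans hpc
  have hp1 : p < 1 := by linarith
  have h1p : 0 < 1 - p := by linarith
  set f : ℝ → ℝ := fun u => p * u ^ (1 - q) + (1 - p) * u ^ (-q) with hf
  have hf1 : f 1 = 1 := by simp [hf, Real.one_rpow]
  -- derivative at 1 is p - q > 0
  have hderiv : HasDerivAt f (p - q) 1 := by
    have h1 : HasDerivAt (fun u : ℝ => u ^ (1 - q)) ((1 - q) * (1:ℝ) ^ (1 - q - 1)) 1 :=
      Real.hasDerivAt_rpow_const (Or.inl one_ne_zero)
    have h2 : HasDerivAt (fun u : ℝ => u ^ (-q)) ((-q) * (1:ℝ) ^ (-q - 1)) 1 :=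
      Real.hasDerivAt_rpow_const (Or.inl one_ne_zero)
    have h := ((h1.const_mul p).add (h2.const_mul (1 - p)))
    simp only [Real.one_rpow, mul_one] at h
    exact h.congr_deriv (by ring)
  have hs := hasDerivAt_iff_tendsto_slope.mp hderiv
  have hpos : ∀ᶠ u in nhdsWithin (1:ℝ) {(1:ℝ)}ᶜ, 0 < slope f 1 u :=
    hs.eventually (eventually_gt_nhds (by linarith : (0:ℝ) < p - q))
  have hmono : nhdsWithin (1:ℝ) (Iio 1) ≤ nhdsWithin (1:ℝ) {(1:ℝ)}ᶜ :=
    nhdsWithin_mono _ (fun x hx => ne_of_lt hx)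
  have hpos' : ∀ᶠ u in nhdsWithin (1:ℝ) (Iio 1), 0 < slope f 1 u := hpos.filter_mono hmono
  have hIoo : Ioo (0:ℝ) 1 ∈ nhdsWithin (1:ℝ) (Iio 1) :=
    Ioo_mem_nhdsLT_of_mem ⟨zero_lt_one, le_refl 1⟩
  obtain ⟨u0, hu0slope, hu0mem⟩ := (hpos'.and (eventually_of_mem hIoo (fun x hx => hx))).exists
  obtain ⟨hu00, hu01⟩ := hu0mem
  -- f u0 < 1
  have hfu0 : f u0 < 1 := by
    rw [slope_def_field, hf1] at hu0slope
    rcases div_pos_iff.mp hu0slope with ⟨h1, h2⟩ | ⟨h1, h2⟩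
    · linarith
    · linarith
  -- choose a small point where f > 1
  set a : ℝ := min u0 ((1 - p) ^ (1 / q)) with ha
  have ha0 : 0 < a := lt_min hu00 (Real.rpow_pos_of_pos h1p _)
  have hau0 : a ≤ u0 := min_le_left _ _
  have haq : a ^ q ≤ 1 - p := by
    calc a ^ q ≤ ((1 - p) ^ (1 / q)) ^ q :=
          Real.rpow_le_rpow ha0.le (min_le_right _ _) hq0.le
      _ = 1 - p := by
          rw [← Real.rpow_mul h1p.le, one_div, inv_mul_cancel₀ hq0.ne', Real.rpow_one]
  have hfa : 1 < f a := by
    have haqpos : 0 < a ^ q := Real.rpow_pos_of_pos ha0 _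
    have h1 : (1 - p) * a ^ (-q) ≥ 1 := by
      rw [Real.rpow_neg ha0.le]
      have hinv : (1 - p)⁻¹ ≤ (a ^ q)⁻¹ := inv_anti₀ haqpos haq
      have : (1 - p) * (1 - p)⁻¹ ≤ (1 - p) * (a ^ q)⁻¹ :=
        mul_le_mul_of_nonneg_left hinv h1p.le
      rw [mul_inv_cancel₀ h1p.ne'] at this
      linarith
    have h2 : 0 < p * a ^ (1 - q) :=
      mul_pos hp0 (Real.rpow_pos_of_pos ha0 _)
    simp only [hf]
    linarith
  -- continuity on [a, u0]
  have hcont : ContinuousOn f (Icc a u0) := by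
    have hne : ∀ x ∈ Icc a u0, x ≠ 0 ∨ (0:ℝ) ≤ 1 - q :=
      fun x hx => Or.inl (ne_of_gt (lt_of_lt_of_le ha0 hx.1))
    have hne' : ∀ x ∈ Icc a u0, x ≠ 0 ∨ (0:ℝ) ≤ -q :=
      fun x hx => Or.inl (ne_of_gt (lt_of_lt_of_le ha0 hx.1))
    exact ((continuousOn_id.rpow_const hne).const_smul p).add
      ((continuousOn_id.rpow_const hne').const_smul (1 - p))
  -- IVT
  have hmem : (1:ℝ) ∈ Icc (f u0) (f a) := ⟨hfu0.le, hfa.le⟩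
  obtain ⟨u, hu, hfu⟩ := intermediate_value_Icc' hau0 hcont hmem
  exact ⟨u, ⟨lt_of_lt_of_le ha0 hu.1, lt_of_le_of_lt hu.2 hu01⟩, hfu⟩
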